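/- Let (x,Λ) be a KKT pair of the NSDP problem minimize f(x) subject to G(x) ∈ S^m_+ (i.e., ∇f(x) − ∇G(x)*Λ = 0, Λ ∘ G(x) = 0, G(x) ∈ S^m_+, Λ ∈ S^m_+). If β > 0, then P((β/2)Λ − G(x)) = (β/2)Λ, where P is the projection onto S^m_+. -/

import Mathlib

open Matrix

attribute [local instance] Matrix.frobeniusSeminormedAddCommGroup
  Matrix.frobeniusNormedAddCommGroup Matrix.frobeniusNormedSpace

/-- The Jordan product `Y ∘ Z = (YZ + ZY)/2`. -/
noncomputable def jmul {m : ℕ} (Y Z : Matrix (Fin m) (Fin m) ℝ) : Matrix (Fin m) (Fin m) ℝ :=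
  (2⁻¹ : ℝ) • (Y * Z + Z * Y)

/-- The trace inner product `⟨Y, Z⟩ = tr (Y Z)`. -/
noncomputable def finner {m : ℕ} (Y Z : Matrix (Fin m) (Fin m) ℝ) : ℝ := (Y * Z).trace

/-- `P` is the nearest-point (Frobenius-norm) projection onto the cone of positive
semidefinite matrices, viewed on the space of real symmetric matrices. -/
def IsProjPSD {m : ℕ} (P : Matrix (Fin m) (Fin m) ℝ → Matrix (Fin m) (Fin m) ℝ) : Prop :=
  ∀ Z : Matrix (Fin m) (Fin m) ℝ, Z.IsSymm →
    (P Z).PosSemidef ∧ ∀ W : Matrix (Fin m) (Fin m) ℝ, W.PosSemidef → ‖Z - P Z‖ ≤ ‖Z - W‖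

namespace ProjKKTAux

variable {m : ℕ}

/-- Entrywise inner product (the Frobenius inner product). -/
noncomputable def ip (A B : Matrix (Fin m) (Fin m) ℝ) : ℝ := ∑ i, ∑ j, A i j * B i j

lemma ip_self_nonneg (A : Matrix (Fin m) (Fin m) ℝ) : 0 ≤ ip A A :=
  Finset.sum_nonneg fun _ _ => Finset.sum_nonneg fun _ _ => mul_self_nonneg _

lemma ip_self_eq_zero {A : Matrix (Fin m) (Fin m) ℝ} (h : ip A A = 0) : A = 0 := by
  ext i j
  have h1 := (Finset.sum_eq_zero_iff_of_nonneg (fun i _ =>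
    Finset.sum_nonneg fun j _ => mul_self_nonneg (A i j))).mp h i (Finset.mem_univ i)
  have h2 := (Finset.sum_eq_zero_iff_of_nonneg (fun j _ =>
    mul_self_nonneg (A i j))).mp h1 j (Finset.mem_univ j)
  simpa [mul_self_eq_zero] using h2

lemma norm_sq_eq_ip (A : Matrix (Fin m) (Fin m) ℝ) : ‖A‖ ^ 2 = ip A A := by
  have hnn : (0:ℝ) ≤ ∑ i, ∑ j, ‖A i j‖ ^ (2:ℝ) :=
    Finset.sum_nonneg fun i _ => Finset.sum_nonneg fun j _ =>
      Real.rpow_nonneg (norm_nonneg _) _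
  rw [frobenius_norm_def, ← Real.rpow_natCast _ 2, ← Real.rpow_mul hnn]
  norm_num
  unfold ip
  congr 1; ext i; congr 1; ext j
  ring

lemma ip_sub_sub (A B : Matrix (Fin m) (Fin m) ℝ) :
    ip (A - B) (A - B) = ip A A - 2 * ip A B + ip B B := by
  unfold ip
  simp only [Matrix.sub_apply]
  rw [Finset.mul_sum, ← Finset.sum_sub_distrib, ← Finset.sum_add_distrib]
  congr 1; ext i
  rw [Finset.mul_sum, ← Finset.sum_sub_distrib, ← Finset.sum_add_distrib]
  congr 1; ext j; ring

lemma ip_add_add (A B : Matrix (Fin m) (Fin m) ℝ) :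
    ip (A + B) (A + B) = ip A A + 2 * ip A B + ip B B := by
  unfold ip
  simp only [Matrix.add_apply]
  rw [Finset.mul_sum, ← Finset.sum_add_distrib, ← Finset.sum_add_distrib]
  congr 1; ext i
  rw [Finset.mul_sum, ← Finset.sum_add_distrib, ← Finset.sum_add_distrib]
  congr 1; ext j; ring

lemma ip_smul_smul (r : ℝ) (A : Matrix (Fin m) (Fin m) ℝ) :
    ip (r • A) (r • A) = r ^ 2 * ip A A := by
  unfold ip
  rw [Finset.mul_sum]
  congr 1; ext i
  rw [Finset.mul_sum]
  congr 1; ext j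
  simp [Matrix.smul_apply]
  ring

lemma ip_neg_neg (A : Matrix (Fin m) (Fin m) ℝ) : ip (-A) (-A) = ip A A := by
  unfold ip
  congr 1; ext i; congr 1; ext j
  simp

lemma ip_eq_trace (A B : Matrix (Fin m) (Fin m) ℝ) (hA : A.IsSymm) :
    ip A B = (A * B).trace := by
  unfold ip
  rw [Matrix.trace, Finset.sum_comm]
  congr 1; ext j
  simp only [Matrix.mul_apply, Matrix.diag]
  congr 1; ext i
  rw [hA.apply]

lemma psd_isSymm {A : Matrix (Fin m) (Fin m) ℝ} (h : A.PosSemidef) : A.IsSymm := by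
  have := h.1
  rw [Matrix.IsHermitian] at this
  rw [Matrix.IsSymm]
  ext i j
  have := congrFun (congrFun this i) j
  simpa [Matrix.conjTranspose_apply] using this

lemma psd_smul {A : Matrix (Fin m) (Fin m) ℝ} (h : A.PosSemidef) {c : ℝ} (hc : 0 ≤ c) :
    (c • A).PosSemidef := by
  refine ⟨?_, fun x => ?_⟩
  · show (c • A)ᴴ = c • A
    rw [Matrix.conjTranspose_smul, h.1.eq, star_trivial]
  · refine le_of_le_of_eq (mul_nonneg hc (h.2 x)) ?_
    simp only [Finsupp.sum, Finset.mul_sum, Matrix.smul_apply, smul_eq_mul]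
    exact Finset.sum_congr rfl fun i _ => Finset.sum_congr rfl fun j _ => by ring

lemma psd_diag_nonneg {A : Matrix (Fin m) (Fin m) ℝ} (h : A.PosSemidef) (i : Fin m) :
    0 ≤ A i i := by
  have := h.dotProduct_mulVec_nonneg (Pi.single i 1)
  simpa [Matrix.mulVec_single, dotProduct, Pi.single_apply] using this

lemma psd_trace_nonneg {A : Matrix (Fin m) (Fin m) ℝ} (h : A.PosSemidef) : 0 ≤ A.trace :=
  Finset.sum_nonneg fun i _ => psd_diag_nonneg h i

lemma trace_mul_psd_nonneg {A B : Matrix (Fin m) (Fin m) ℝ} (hA : A.PosSemidef)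
    (hB : B.PosSemidef) : 0 ≤ (A * B).trace := by
  obtain ⟨C, rfl⟩ : ∃ C : Matrix (Fin m) (Fin m) ℝ, B = Cᴴ * C := by
    open scoped MatrixOrder in
    obtain ⟨C, hC⟩ := CStarAlgebra.nonneg_iff_eq_star_mul_self.mp hB.nonneg
    exact ⟨C, hC⟩
  have h1 : (A * (Cᴴ * C)).trace = (C * A * Cᴴ).trace := by
    rw [Matrix.trace_mul_comm, Matrix.trace_mul_cycle C A Cᴴ]
  rw [h1]
  exact psd_trace_nonneg (hA.mul_mul_conjTranspose_same C)

lemma norm_le_of_ip {A B : Matrix (Fin m) (Fin m) ℝ} (h : ip A A ≤ ip B B) : ‖A‖ ≤ ‖B‖ := by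
  rw [← Real.sqrt_sq (norm_nonneg A), ← Real.sqrt_sq (norm_nonneg B)]
  exact Real.sqrt_le_sqrt (by rw [norm_sq_eq_ip, norm_sq_eq_ip]; exact h)

end ProjKKTAux

open ProjKKTAux in
/-- If `(x, Λ)` is a KKT pair of the NSDP problem and `β > 0`, then
`P((β/2)Λ - G(x)) = (β/2)Λ`. -/
theorem proj_kkt {n m : ℕ}
    (P : Matrix (Fin m) (Fin m) ℝ → Matrix (Fin m) (Fin m) ℝ) (hP : IsProjPSD P)
    (f : (Fin n → ℝ) → ℝ) (hf : Differentiable ℝ f)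
    (G : (Fin n → ℝ) → Matrix (Fin m) (Fin m) ℝ) (hGsymm : ∀ x, (G x).IsSymm)
    (hG : Differentiable ℝ G)
    (x : Fin n → ℝ) (Λ : Matrix (Fin m) (Fin m) ℝ)
    (hstat : ∀ v : Fin n → ℝ, fderiv ℝ f x v - finner (fderiv ℝ G x v) Λ = 0)
    (hcomp : jmul Λ (G x) = 0) (hGx : (G x).PosSemidef) (hΛ : Λ.PosSemidef)
    (β : ℝ) (hβ : 0 < β) :
    P ((β / 2) • Λ - G x) = (β / 2) • Λ := by
  set c : ℝ := β / 2 with hcdef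
  have hc0 : 0 ≤ c := by positivity
  set Gx := G x with hGxdef
  -- complementarity gives trace (Λ * Gx) = 0
  have hΛG : (Λ * Gx).trace = 0 := by
    have h2 : Λ * Gx + Gx * Λ = 0 := by
      have := congrArg (fun M => (2:ℝ) • M) hcomp
      simpa [jmul, smul_smul] using this
    have h3 := congrArg Matrix.trace h2
    rw [Matrix.trace_add, Matrix.trace_mul_comm Gx Λ, Matrix.trace_zero] at h3
    linarith
  have hΛs : Λ.IsSymm := psd_isSymm hΛ
  have hGs : Gx.IsSymm := hGsymm x
  set Z : Matrix (Fin m) (Fin m) ℝ := c • Λ - Gx with hZdef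
  have hZsymm : Z.IsSymm := by
    rw [Matrix.IsSymm] at hΛs hGs ⊢
    rw [hZdef, Matrix.transpose_sub, Matrix.transpose_smul, hΛs, hGs]
  obtain ⟨hPZpsd, hPZmin⟩ := hP Z hZsymm
  have hcΛpsd : (c • Λ).PosSemidef := psd_smul hΛ hc0
  -- key inequality: for every PSD W, ip Gx Gx ≤ ip (Z - W) (Z - W)
  have key : ∀ W : Matrix (Fin m) (Fin m) ℝ, W.PosSemidef →
      ip Gx Gx ≤ ip (Z - W) (Z - W) := by
    intro W hW
    have hD : Z - W = (c • Λ - W) - Gx := by rw [hZdef]; abel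
    rw [hD, ip_sub_sub]
    have hsymmD : (c • Λ - W).IsSymm := by
      have hWs := psd_isSymm hW
      rw [Matrix.IsSymm] at hΛs hWs ⊢
      rw [Matrix.transpose_sub, Matrix.transpose_smul, hΛs, hWs]
    have h1 : ip (c • Λ - W) Gx ≤ 0 := by
      rw [ip_eq_trace _ _ hsymmD, Matrix.sub_mul, Matrix.trace_sub,
        Matrix.smul_mul, Matrix.trace_smul, hΛG]
      have := trace_mul_psd_nonneg hW hGx
      simp only [smul_eq_mul, mul_zero, smul_zero, zero_sub, neg_nonpos]
      linarith
    have h2 := ip_self_nonneg (c • Λ - W)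
    linarith
  -- both ‖Z - P Z‖ and ‖Gx‖ equal the minimal distance
  have hZcΛ : Z - c • Λ = -Gx := by rw [hZdef]; abel
  have hle1 : ‖Z - P Z‖ ≤ ‖Gx‖ := by
    have := hPZmin (c • Λ) hcΛpsd
    rwa [hZcΛ, norm_neg] at this
  have hle2 : ‖Gx‖ ≤ ‖Z - P Z‖ := norm_le_of_ip (key (P Z) hPZpsd)
  have heq : ‖Z - P Z‖ = ‖Gx‖ := le_antisymm hle1 hle2
  have hu : ip (Z - P Z) (Z - P Z) = ip Gx Gx := by
    rw [← norm_sq_eq_ip, ← norm_sq_eq_ip, heq]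
  have hv : ip (Z - c • Λ) (Z - c • Λ) = ip Gx Gx := by rw [hZcΛ, ip_neg_neg]
  have hMpsd : ((2⁻¹:ℝ) • (P Z + c • Λ)).PosSemidef :=
    psd_smul (hPZpsd.add hcΛpsd) (by norm_num)
  have hZM : Z - (2⁻¹:ℝ) • (P Z + c • Λ) = (2⁻¹:ℝ) • ((Z - P Z) + (Z - c • Λ)) := by
    ext i j
    simp only [Matrix.sub_apply, Matrix.smul_apply, Matrix.add_apply, smul_eq_mul]
    ring
  have hkM := key _ hMpsd
  rw [hZM, ip_smul_smul, ip_add_add, hu, hv] at hkM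
  have huv : ip Gx Gx ≤ ip (Z - P Z) (Z - c • Λ) := by nlinarith [hkM]
  have hzero : ip (c • Λ - P Z) (c • Λ - P Z) ≤ 0 := by
    have e : c • Λ - P Z = (Z - P Z) - (Z - c • Λ) := by
      ext i j
      simp only [Matrix.sub_apply, Matrix.smul_apply, smul_eq_mul]
      ring
    rw [e, ip_sub_sub, hu, hv]
    linarith
  have hz := ip_self_eq_zero (le_antisymm hzero (ip_self_nonneg _))
  exact (eq_of_sub_eq_zero hz).symm
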